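/- Let $A \in (1,2)$, $a > 0$, $g_* = (A-1)/a$, $\omega_0 \in (0,1)$. There exists a unique two-sided sequence $(\bar g_n)_{n \in \mathbb{Z}}$ in $(0, g_*)$ such that $\bar g_0 = \omega_0 g_*$ and $\bar g_{n+1} = f(\bar g_n)$ for all $n \in \mathbb{Z}$, where $f(x) = Ax - ax^2$. Moreover this sequence is strictly increasing, tends to $0$ as $n \to -\infty$, and tends to $g_*$ as $n \to +\infty$. -/

import Mathlib

open Filter Topology

/-- unique two-sided orbit of `f x = A x - a x²` in `(0, g⋆)` with
`ḡ₀ = ω₀ g⋆`; this orbit is strictly increasing, tends to `0` at `-∞` and to `g⋆` at `+∞`. -/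
theorem stmt_1 (A a : ℝ) (hA1 : 1 < A) (hA2 : A < 2) (ha : 0 < a)
    (f : ℝ → ℝ) (hf : ∀ x, f x = A * x - a * x ^ 2)
    (gs : ℝ) (hgs : gs = (A - 1) / a)
    (ω0 : ℝ) (hω0 : ω0 ∈ Set.Ioo (0 : ℝ) 1) :
    (∃! gbar : ℤ → ℝ,
      (∀ n : ℤ, gbar n ∈ Set.Ioo 0 gs) ∧ gbar 0 = ω0 * gs ∧
        (∀ n : ℤ, gbar (n + 1) = f (gbar n))) ∧
    (∀ gbar : ℤ → ℝ,
      ((∀ n : ℤ, gbar n ∈ Set.Ioo 0 gs) ∧ gbar 0 = ω0 * gs ∧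
        (∀ n : ℤ, gbar (n + 1) = f (gbar n))) →
      StrictMono gbar ∧ Tendsto gbar atBot (𝓝 0) ∧ Tendsto gbar atTop (𝓝 gs)) := by
  obtain ⟨hω0pos, hω0lt⟩ := hω0
  have hgspos : 0 < gs := by
    rw [hgs]; exact div_pos (by linarith) ha
  have hgs' : a * gs = A - 1 := by
    rw [hgs]; field_simp
  -- f is strictly increasing on [0, gs]
  have hmono : ∀ x y : ℝ, 0 ≤ x → x < y → y ≤ gs → f x < f y := by
    intro x y hx hxy hy
    rw [hf, hf]
    nlinarith [mul_pos ha (sub_pos.mpr hxy)]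
  have hinj : ∀ x y : ℝ, x ∈ Set.Ioo 0 gs → y ∈ Set.Ioo 0 gs → f x = f y → x = y := by
    intro x y hx hy hfe
    rcases lt_trichotomy x y with h | h | h
    · exact absurd hfe (ne_of_lt (hmono x y hx.1.le h hy.2.le))
    · exact h
    · exact absurd hfe.symm (ne_of_lt (hmono y x hy.1.le h hx.2.le))
  have hfixgs : f gs = gs := by
    rw [hf]; nlinarith [hgs']
  -- x < f x on (0, gs)
  have hgt : ∀ x : ℝ, x ∈ Set.Ioo 0 gs → x < f x := by
    intro x hx
    rw [hf]
    have h1 : a * x < A - 1 := by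
      rw [← hgs']; exact (mul_lt_mul_iff_right₀ ha).mpr hx.2
    nlinarith [mul_pos hx.1 (sub_pos.mpr h1)]
  have hmaps : ∀ x : ℝ, x ∈ Set.Ioo 0 gs → f x ∈ Set.Ioo 0 gs := by
    intro x hx
    refine ⟨lt_trans hx.1 (hgt x hx), ?_⟩
    have := hmono x gs hx.1.le hx.2 le_rfl
    rwa [hfixgs] at this
  -- explicit inverse of f on [0, gs]
  set finv : ℝ → ℝ := fun y => (A - Real.sqrt (A ^ 2 - 4 * a * y)) / (2 * a) with hfinv
  have hdisc : ∀ y : ℝ, y ≤ gs → 0 ≤ A ^ 2 - 4 * a * y := by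
    intro y hy
    have : a * y ≤ A - 1 := by
      rw [← hgs']; exact mul_le_mul_of_nonneg_left hy ha.le
    nlinarith [sq_nonneg (A - 2)]
  have hfinv_spec : ∀ y : ℝ, y ∈ Set.Ioo 0 gs → finv y ∈ Set.Ioo 0 gs ∧ f (finv y) = y := by
    intro y hy
    have hd := hdisc y hy.2.le
    have hs2 : Real.sqrt (A ^ 2 - 4 * a * y) ^ 2 = A ^ 2 - 4 * a * y := Real.sq_sqrt hd
    have hsnn : 0 ≤ Real.sqrt (A ^ 2 - 4 * a * y) := Real.sqrt_nonneg _
    have hsltA : Real.sqrt (A ^ 2 - 4 * a * y) < A := by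
      rw [Real.sqrt_lt' (by linarith)]
      nlinarith [hy.1]
    have hsgt : 2 - A < Real.sqrt (A ^ 2 - 4 * a * y) := by
      rw [Real.lt_sqrt (by linarith)]
      have : a * y < A - 1 := by
        rw [← hgs']; exact (mul_lt_mul_iff_right₀ ha).mpr hy.2
      nlinarith
    refine ⟨⟨?_, ?_⟩, ?_⟩
    · apply div_pos (by linarith) (by linarith)
    · rw [div_lt_iff₀ (by linarith : (0:ℝ) < 2 * a)]
      nlinarith [hgs']
    · rw [hf, hfinv]
      field_simp
      nlinarith [hs2]
  have hfinv_maps : ∀ y : ℝ, y ∈ Set.Ioo 0 gs → finv y ∈ Set.Ioo 0 gs :=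
    fun y hy => (hfinv_spec y hy).1
  set x0 : ℝ := ω0 * gs with hx0def
  have hx0 : x0 ∈ Set.Ioo 0 gs := by
    constructor
    · exact mul_pos hω0pos hgspos
    · calc ω0 * gs < 1 * gs := by
            exact (mul_lt_mul_iff_left₀ hgspos).mpr hω0lt
        _ = gs := one_mul gs
  -- iterates stay in (0, gs)
  have hiterf : ∀ k : ℕ, f^[k] x0 ∈ Set.Ioo 0 gs := by
    intro k
    induction k with
    | zero => simpa using hx0
    | succ k ih => rw [Function.iterate_succ_apply']; exact hmaps _ ih
  have hiterfinv : ∀ k : ℕ, finv^[k] x0 ∈ Set.Ioo 0 gs := by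
    intro k
    induction k with
    | zero => simpa using hx0
    | succ k ih => rw [Function.iterate_succ_apply']; exact hfinv_maps _ ih
  -- the candidate orbit
  set g : ℤ → ℝ := fun n => if 0 ≤ n then f^[n.toNat] x0 else finv^[(-n).toNat] x0 with hgdef
  have hg_mem : ∀ n : ℤ, g n ∈ Set.Ioo 0 gs := by
    intro n
    by_cases h : 0 ≤ n
    · simp only [hgdef, if_pos h]; exact hiterf _
    · simp only [hgdef, if_neg h]; exact hiterfinv _
  have hg0 : g 0 = x0 := by simp [hgdef]
  have hg_neg : ∀ n : ℤ, n < 0 → g n = finv^[(-n).toNat] x0 := by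
    intro n hn
    simp only [hgdef, if_neg (not_le.mpr hn)]
  have hgrec : ∀ n : ℤ, g (n + 1) = f (g n) := by
    intro n
    rcases le_or_gt 0 n with hn | hn
    · have h1 : (0:ℤ) ≤ n + 1 := by linarith
      simp only [hgdef, if_pos hn, if_pos h1]
      rw [Int.toNat_add hn (by norm_num), Int.toNat_one, Function.iterate_succ_apply']
    · -- n < 0
      have hgn1 : g (n + 1) = finv^[(-(n+1)).toNat] x0 := by
        rcases eq_or_lt_of_le (by linarith : n + 1 ≤ 0) with h | h
        · rw [h, hg0]; simp
        · exact hg_neg _ h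
      have hmn : (-n).toNat = (-(n+1)).toNat + 1 := by omega
      rw [hgn1, hg_neg n hn, hmn, Function.iterate_succ_apply']
      exact ((hfinv_spec _ (hiterfinv _)).2).symm
  refine ⟨⟨g, ⟨hg_mem, hg0, hgrec⟩, ?_⟩, ?_⟩
  · -- uniqueness
    rintro h ⟨hmem, h0, hrec⟩
    funext n
    induction n using Int.induction_on with
    | zero => rw [h0, hg0]
    | succ k ih => rw [hrec, hgrec, ih]
    | pred k ih =>
      apply hinj _ _ (hmem _) (hg_mem _)
      have e1 : h (-(k:ℤ) - 1 + 1) = f (h (-(k:ℤ) - 1)) := hrec _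
      have e2 : g (-(k:ℤ) - 1 + 1) = f (g (-(k:ℤ) - 1)) := hgrec _
      rw [show (-(k:ℤ) - 1 + 1) = -(k:ℤ) by ring] at e1 e2
      rw [← e1, ← e2, ih]
  · -- qualitative properties
    rintro gb ⟨hmem, h0, hrec⟩
    have hlt : ∀ n : ℤ, gb n < gb (n + 1) := by
      intro n; rw [hrec]; exact hgt _ (hmem n)
    have hsm : StrictMono gb := strictMono_int_of_lt_succ hlt
    have hcont : Continuous f := by
      have : f = fun x => A * x - a * x ^ 2 := funext hf
      rw [this]
      exact (continuous_const.mul continuous_id).sub (continuous_const.mul (continuous_pow 2))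
    have hbdda : BddAbove (Set.range gb) := ⟨gs, by rintro _ ⟨n, rfl⟩; exact (hmem n).2.le⟩
    have hbddb : BddBelow (Set.range gb) := ⟨0, by rintro _ ⟨n, rfl⟩; exact (hmem n).1.le⟩
    have htop : Tendsto gb atTop (𝓝 (⨆ n, gb n)) := tendsto_atTop_ciSup hsm.monotone hbdda
    have hbot : Tendsto gb atBot (𝓝 (⨅ n, gb n)) := tendsto_atBot_ciInf hsm.monotone hbddb
    set L := ⨆ n, gb n with hL
    set M := ⨅ n, gb n with hM
    -- fixed point equation for limits
    have hfix : ∀ (l : Filter ℤ) (x : ℝ), l.NeBot → Tendsto (fun n : ℤ => n + 1) l l →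
        Tendsto gb l (𝓝 x) → f x = x := by
      intro l x hne hshift hx
      have h1 : Tendsto (fun n : ℤ => gb (n + 1)) l (𝓝 x) := hx.comp hshift
      have h2 : Tendsto (fun n : ℤ => f (gb n)) l (𝓝 (f x)) := (hcont.tendsto x).comp hx
      have : (fun n : ℤ => gb (n + 1)) = fun n : ℤ => f (gb n) := funext hrec
      rw [this] at h1
      exact tendsto_nhds_unique h2 h1
    have hshiftT : Tendsto (fun n : ℤ => n + 1) atTop atTop :=
      tendsto_atTop_add_const_right atTop 1 tendsto_id
    have hshiftB : Tendsto (fun n : ℤ => n + 1) atBot atBot :=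
      tendsto_atBot_add_const_right atBot 1 tendsto_id
    have hfixL : f L = L := hfix atTop L inferInstance hshiftT htop
    have hfixM : f M = M := hfix atBot M inferInstance hshiftB hbot
    have hLgs : L = gs := by
      have hLle : L ≤ gs := ciSup_le fun n => (hmem n).2.le
      have hLpos : 0 < L := lt_of_lt_of_le (hmem 0).1 (le_ciSup hbdda 0)
      rw [hf] at hfixL
      have : L * (A - 1 - a * L) = 0 := by ring_nf; ring_nf at hfixL; linarith
      rcases mul_eq_zero.mp this with h | h
      · exact absurd h (ne_of_gt hLpos)
      · rw [hgs]; field_simp; linarith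
    have hM0 : M = 0 := by
      have hMnn : 0 ≤ M := le_ciInf fun n => (hmem n).1.le
      have hMlt : M < gs := lt_of_le_of_lt (ciInf_le hbddb 0) (hmem 0).2
      rw [hf] at hfixM
      have : M * (A - 1 - a * M) = 0 := by ring_nf; ring_nf at hfixM; linarith
      rcases mul_eq_zero.mp this with h | h
      · exact h
      · exfalso
        have : M = gs := by rw [hgs]; field_simp; linarith
        exact absurd this (ne_of_lt hMlt)
    exact ⟨hsm, hM0 ▸ hbot, hLgs ▸ htop⟩
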